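/- Fix Q : 𝒳 × 𝒜 → ℝ and let {P^{Q,μ}} be a family of row-stochastic kernels on 𝒳 indexed by probability distributions μ, satisfying Σ_{x'} |P^{Q,μ₁}(x,x') − P^{Q,μ₂}(x,x')| ≤ L_p ‖μ₁−μ₂‖_TV for all x with 0 < L_p < 1. Suppose μ̃ is a probability distribution with μ̃ = μ̃ P^{Q,μ̃}, and P^{Q,μ̃} satisfies the Doeblin condition P^{Q,μ̃}(x,x') ≥ β ν(x') for a probability distribution ν and β ∈ ((1+L_p)/2, 1). Let 0 < ρ^μ ≤ 1 and define the iteration μ_{k+1} = μ_k + ρ^μ (μ_k P^{Q,μ_k} − μ_k) starting from a probability distribution μ₀. Then for all k ≥ 0, ‖μ_{k+1} − μ̃‖_TV ≤ (1 − ρ^μ(2β − 1 − L_p)) ‖μ_k − μ̃‖_TV, and 1 − ρ^μ(2β−1−L_p) ∈ (0,1). -/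
import Mathlib


open Finset

/-- A probability distribution on a finite set. -/
def IsProb {𝒳 : Type*} [Fintype 𝒳] (μ : 𝒳 → ℝ) : Prop :=
  (∀ x, 0 ≤ μ x) ∧ ∑ x, μ x = 1

/-- Total variation norm: `‖m‖_TV = sup_{A ⊆ 𝒳} |Σ_{x∈A} m(x)|`. -/
noncomputable def tvNorm {𝒳 : Type*} [Fintype 𝒳] (m : 𝒳 → ℝ) : ℝ :=
  ⨆ A : Finset 𝒳, |∑ x ∈ A, m x|

/-- A row-stochastic kernel on a finite set. -/
def IsKernel {𝒳 : Type*} [Fintype 𝒳] (P : 𝒳 → 𝒳 → ℝ) : Prop :=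
  (∀ x x', 0 ≤ P x x') ∧ ∀ x, ∑ x', P x x' = 1

lemma tv_bdd {𝒳 : Type*} [Fintype 𝒳] (m : 𝒳 → ℝ) :
    BddAbove (Set.range fun A : Finset 𝒳 => |∑ x ∈ A, m x|) :=
  (Set.finite_range _).bddAbove

lemma tv_nonneg {𝒳 : Type*} [Fintype 𝒳] (m : 𝒳 → ℝ) : 0 ≤ tvNorm m := by
  have h := le_ciSup (tv_bdd m) (∅ : Finset 𝒳)
  simpa [tvNorm] using h

lemma tv_le_half {𝒳 : Type*} [Fintype 𝒳] (m : 𝒳 → ℝ) (hm : ∑ x, m x = 0) :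
    tvNorm m ≤ (∑ x, |m x|) / 2 := by
  classical
  apply ciSup_le
  intro A
  have hsplit : ∑ x ∈ A, m x + ∑ x ∈ Aᶜ, m x = 0 := by
    rw [Finset.sum_add_sum_compl]; exact hm
  have h1 : |∑ x ∈ A, m x| ≤ ∑ x ∈ A, |m x| := Finset.abs_sum_le_sum_abs _ _
  have h2 : |∑ x ∈ Aᶜ, m x| ≤ ∑ x ∈ Aᶜ, |m x| := Finset.abs_sum_le_sum_abs _ _
  have heq : |∑ x ∈ A, m x| = |∑ x ∈ Aᶜ, m x| := by
    have : ∑ x ∈ A, m x = -∑ x ∈ Aᶜ, m x := by linarith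
    rw [this, abs_neg]
  have htot : ∑ x ∈ A, |m x| + ∑ x ∈ Aᶜ, |m x| = ∑ x, |m x| := Finset.sum_add_sum_compl _ _
  linarith

lemma l1_le_two_tv {𝒳 : Type*} [Fintype 𝒳] (m : 𝒳 → ℝ) (hm : ∑ x, m x = 0) :
    ∑ x, |m x| ≤ 2 * tvNorm m := by
  classical
  set A : Finset 𝒳 := Finset.univ.filter (fun x => 0 ≤ m x) with hA
  have hAc : ∀ x ∈ Aᶜ, m x < 0 := by
    intro x hx
    simp [hA, Finset.mem_compl, Finset.mem_filter] at hx
    linarith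
  have h1 : ∑ x ∈ A, |m x| = ∑ x ∈ A, m x := by
    apply Finset.sum_congr rfl; intro x hx
    exact abs_of_nonneg (by simpa [hA] using hx)
  have h2 : ∑ x ∈ Aᶜ, |m x| = -∑ x ∈ Aᶜ, m x := by
    rw [← Finset.sum_neg_distrib]
    apply Finset.sum_congr rfl; intro x hx
    exact abs_of_neg (hAc x hx)
  have hsplit : ∑ x ∈ A, m x + ∑ x ∈ Aᶜ, m x = 0 := by
    rw [Finset.sum_add_sum_compl]; exact hm
  have htot : ∑ x ∈ A, |m x| + ∑ x ∈ Aᶜ, |m x| = ∑ x, |m x| := Finset.sum_add_sum_compl _ _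
  have hle : (∑ x, |m x|) = 2 * ∑ x ∈ A, m x := by linarith
  have habs : ∑ x ∈ A, m x ≤ |∑ x ∈ A, m x| := le_abs_self _
  have hsup : |∑ x ∈ A, m x| ≤ tvNorm m := le_ciSup (tv_bdd m) A
  rw [hle]
  linarith

/-- Convergence of the distribution iteration `μ_{k+1} = μ_k + ρ^μ (μ_k P^{Q,μ_k} − μ_k)`
towards the equilibrium `μ̃ = μ̃ P^{Q,μ̃}` with rate `Λ_μ = 1 − ρ^μ(2β − 1 − L_p) ∈ (0,1)`. -/
theorem mu_iteration_contraction {𝒳 𝒜 : Type*} [Fintype 𝒳] [Fintype 𝒜]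
    (Q : 𝒳 → 𝒜 → ℝ)
    (P : (𝒳 → ℝ) → 𝒳 → 𝒳 → ℝ)
    (Lp : ℝ) (hLp : 0 < Lp ∧ Lp < 1)
    (hker : ∀ μ, IsProb μ → IsKernel (P μ))
    (hlip : ∀ μ₁ μ₂, IsProb μ₁ → IsProb μ₂ → ∀ x,
      ∑ x', |P μ₁ x x' - P μ₂ x x'| ≤ Lp * tvNorm (fun y => μ₁ y - μ₂ y))
    (μt : 𝒳 → ℝ) (hμt : IsProb μt)
    (hfix : ∀ x', (∑ x, μt x * P μt x x') = μt x')
    (ν : 𝒳 → ℝ) (hν : IsProb ν)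
    (β : ℝ) (hβ : (1 + Lp) / 2 < β ∧ β < 1)
    (hDoe : ∀ x x', β * ν x' ≤ P μt x x')
    (ρ : ℝ) (hρ : 0 < ρ ∧ ρ ≤ 1)
    (μseq : ℕ → 𝒳 → ℝ) (hμ0 : IsProb (μseq 0))
    (hrec : ∀ k x', μseq (k + 1) x' =
      μseq k x' + ρ * ((∑ x, μseq k x * P (μseq k) x x') - μseq k x')) :
    (∀ k, tvNorm (fun x => μseq (k + 1) x - μt x) ≤
        (1 - ρ * (2 * β - 1 - Lp)) * tvNorm (fun x => μseq k x - μt x)) ∧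
      (1 - ρ * (2 * β - 1 - Lp)) ∈ Set.Ioo (0 : ℝ) 1 := by
  classical
  obtain ⟨hLp0, hLp1⟩ := hLp
  obtain ⟨hβ1, hβ2⟩ := hβ
  obtain ⟨hρ0, hρ1⟩ := hρ
  have hc0 : 0 < 2 * β - 1 - Lp := by linarith
  have hmem : (1 - ρ * (2 * β - 1 - Lp)) ∈ Set.Ioo (0 : ℝ) 1 := by
    constructor
    · have h1 : ρ * (2 * β - 1 - Lp) ≤ 1 * (2 * β - 1 - Lp) :=
        mul_le_mul_of_nonneg_right hρ1 hc0.le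
      have h2 : 2 * β - 1 - Lp < 1 := by linarith
      linarith
    · have : 0 < ρ * (2 * β - 1 - Lp) := mul_pos hρ0 hc0
      linarith
  -- every iterate is a probability distribution
  have hprob : ∀ k, IsProb (μseq k) := by
    intro k
    induction k with
    | zero => exact hμ0
    | succ k ih =>
      obtain ⟨hPnn, hPsum⟩ := hker _ ih
      constructor
      · intro x'
        rw [hrec]
        have hS : 0 ≤ ∑ x, μseq k x * P (μseq k) x x' :=
          Finset.sum_nonneg fun x _ => mul_nonneg (ih.1 x) (hPnn x x')
        nlinarith [ih.1 x']
      · have h1 : ∑ x', μseq (k + 1) x' =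
            ∑ x', (μseq k x' + ρ * ((∑ x, μseq k x * P (μseq k) x x') - μseq k x')) :=
          Finset.sum_congr rfl fun x' _ => hrec k x'
        have h2 : ∑ x', ∑ x, μseq k x * P (μseq k) x x' = 1 := by
          rw [Finset.sum_comm]
          have h3 : ∀ x ∈ Finset.univ, ∑ x', μseq k x * P (μseq k) x x' = μseq k x := by
            intro x _
            rw [← Finset.mul_sum, hPsum, mul_one]
          rw [Finset.sum_congr rfl h3, ih.2]
        rw [h1, Finset.sum_add_distrib, ← Finset.mul_sum, Finset.sum_sub_distrib, h2, ih.2]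
        ring
  refine ⟨fun k => ?_, hmem⟩
  obtain ⟨hPk_nn, hPk_sum⟩ := hker _ (hprob k)
  obtain ⟨hPt_nn, hPt_sum⟩ := hker _ hμt
  have hesum : ∑ x, (μseq k x - μt x) = 0 := by
    rw [Finset.sum_sub_distrib, (hprob k).2, hμt.2]; ring
  have hfsum : ∑ x, (μseq (k + 1) x - μt x) = 0 := by
    rw [Finset.sum_sub_distrib, (hprob (k + 1)).2, hμt.2]; ring
  set tv := tvNorm (fun x => μseq k x - μt x) with htvdef
  have htv0 : 0 ≤ tv := tv_nonneg _
  have hl1 : ∑ x, |μseq k x - μt x| ≤ 2 * tv := by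
    simpa using l1_le_two_tv (fun x => μseq k x - μt x) hesum
  -- remainder kernel bound (Doeblin)
  have hR_nn : ∀ x x', 0 ≤ P μt x x' - β * ν x' := fun x x' => sub_nonneg.mpr (hDoe x x')
  have hR_sum : ∀ x, ∑ x', (P μt x x' - β * ν x') = 1 - β := by
    intro x
    rw [Finset.sum_sub_distrib, hPt_sum, ← Finset.mul_sum, hν.2, mul_one]
  have hA : ∀ x', ∑ x, (μseq k x - μt x) * P μt x x'
      = ∑ x, (μseq k x - μt x) * (P μt x x' - β * ν x') := by
    intro x'
    have h0 : ∑ x, (μseq k x - μt x) * (P μt x x' - β * ν x')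
        = (∑ x, (μseq k x - μt x) * P μt x x') - (∑ x, (μseq k x - μt x)) * (β * ν x') := by
      rw [Finset.sum_mul, ← Finset.sum_sub_distrib]
      exact Finset.sum_congr rfl fun x _ => by ring
    rw [h0, hesum]; ring
  have hAbound : ∑ x', |∑ x, (μseq k x - μt x) * P μt x x'|
      ≤ (1 - β) * ∑ x, |μseq k x - μt x| := by
    calc ∑ x', |∑ x, (μseq k x - μt x) * P μt x x'|
        = ∑ x', |∑ x, (μseq k x - μt x) * (P μt x x' - β * ν x')| :=
          Finset.sum_congr rfl fun x' _ => by rw [hA]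
      _ ≤ ∑ x', ∑ x, |μseq k x - μt x| * (P μt x x' - β * ν x') := by
          apply Finset.sum_le_sum; intro x' _
          refine (Finset.abs_sum_le_sum_abs _ _).trans ?_
          apply Finset.sum_le_sum; intro x _
          rw [abs_mul, abs_of_nonneg (hR_nn x x')]
      _ = ∑ x, |μseq k x - μt x| * (1 - β) := by
          rw [Finset.sum_comm]
          exact Finset.sum_congr rfl fun x _ => by rw [← Finset.mul_sum, hR_sum]
      _ = (1 - β) * ∑ x, |μseq k x - μt x| := by rw [← Finset.sum_mul]; ring
  have hBbound : ∑ x', |∑ x, μseq k x * (P (μseq k) x x' - P μt x x')| ≤ Lp * tv := by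
    calc ∑ x', |∑ x, μseq k x * (P (μseq k) x x' - P μt x x')|
        ≤ ∑ x', ∑ x, μseq k x * |P (μseq k) x x' - P μt x x'| := by
          apply Finset.sum_le_sum; intro x' _
          refine (Finset.abs_sum_le_sum_abs _ _).trans ?_
          apply Finset.sum_le_sum; intro x _
          rw [abs_mul, abs_of_nonneg ((hprob k).1 x)]
      _ = ∑ x, μseq k x * ∑ x', |P (μseq k) x x' - P μt x x'| := by
          rw [Finset.sum_comm]
          exact Finset.sum_congr rfl fun x _ => (Finset.mul_sum _ _ _).symm
      _ ≤ ∑ x, μseq k x * (Lp * tv) := by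
          apply Finset.sum_le_sum; intro x _
          exact mul_le_mul_of_nonneg_left (hlip _ _ (hprob k) hμt x) ((hprob k).1 x)
      _ = Lp * tv := by rw [← Finset.sum_mul, (hprob k).2, one_mul]
  have hdecomp : ∀ x', μseq (k + 1) x' - μt x' =
      (1 - ρ) * (μseq k x' - μt x') + ρ * (∑ x, (μseq k x - μt x) * P μt x x')
      + ρ * (∑ x, μseq k x * (P (μseq k) x x' - P μt x x')) := by
    intro x'
    have hsum : ∑ x, μseq k x * P (μseq k) x x'
        = (∑ x, μseq k x * (P (μseq k) x x' - P μt x x'))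
          + (∑ x, (μseq k x - μt x) * P μt x x') + ∑ x, μt x * P μt x x' := by
      rw [← Finset.sum_add_distrib, ← Finset.sum_add_distrib]
      exact Finset.sum_congr rfl fun x _ => by ring
    rw [hrec, hsum, hfix]; ring
  have hstep : ∑ x', |μseq (k + 1) x' - μt x'| ≤
      (1 - ρ) * (∑ x, |μseq k x - μt x|) + ρ * ((1 - β) * ∑ x, |μseq k x - μt x|)
      + ρ * (Lp * tv) := by
    have h1 : ∑ x', |μseq (k + 1) x' - μt x'| ≤
        ∑ x', ((1 - ρ) * |μseq k x' - μt x'| + ρ * |∑ x, (μseq k x - μt x) * P μt x x'|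
          + ρ * |∑ x, μseq k x * (P (μseq k) x x' - P μt x x')|) := by
      apply Finset.sum_le_sum; intro x' _
      rw [hdecomp x']
      refine (abs_add_three _ _ _).trans ?_
      rw [abs_mul, abs_mul, abs_mul, abs_of_nonneg (by linarith : (0:ℝ) ≤ 1 - ρ),
        abs_of_nonneg hρ0.le]
    have h2 : ∑ x', ((1 - ρ) * |μseq k x' - μt x'| + ρ * |∑ x, (μseq k x - μt x) * P μt x x'|
          + ρ * |∑ x, μseq k x * (P (μseq k) x x' - P μt x x')|)
        = (1 - ρ) * (∑ x, |μseq k x - μt x|)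
          + ρ * (∑ x', |∑ x, (μseq k x - μt x) * P μt x x'|)
          + ρ * (∑ x', |∑ x, μseq k x * (P (μseq k) x x' - P μt x x')|) := by
      rw [Finset.sum_add_distrib, Finset.sum_add_distrib, ← Finset.mul_sum, ← Finset.mul_sum,
        ← Finset.mul_sum]
    have h3 : ρ * (∑ x', |∑ x, (μseq k x - μt x) * P μt x x'|)
        ≤ ρ * ((1 - β) * ∑ x, |μseq k x - μt x|) :=
      mul_le_mul_of_nonneg_left hAbound hρ0.le
    have h4 : ρ * (∑ x', |∑ x, μseq k x * (P (μseq k) x x' - P μt x x')|) ≤ ρ * (Lp * tv) :=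
      mul_le_mul_of_nonneg_left hBbound hρ0.le
    calc ∑ x', |μseq (k + 1) x' - μt x'| ≤ _ := h1
      _ = _ := h2
      _ ≤ _ := by linarith
  have hhalf : tvNorm (fun x => μseq (k + 1) x - μt x) ≤ (∑ x', |μseq (k + 1) x' - μt x'|) / 2 := by
    simpa using tv_le_half (fun x => μseq (k + 1) x - μt x) hfsum
  have hS2 : (1 - ρ) * (∑ x, |μseq k x - μt x|) ≤ (1 - ρ) * (2 * tv) :=
    mul_le_mul_of_nonneg_left hl1 (by linarith)
  have hS3 : ρ * ((1 - β) * (∑ x, |μseq k x - μt x|)) ≤ ρ * ((1 - β) * (2 * tv)) :=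
    mul_le_mul_of_nonneg_left (mul_le_mul_of_nonneg_left hl1 (by linarith)) hρ0.le
  have hmid : tvNorm (fun x => μseq (k + 1) x - μt x) ≤ (1 - ρ * (β - Lp / 2)) * tv := by
    have : (∑ x', |μseq (k + 1) x' - μt x'|) / 2 ≤ (1 - ρ * (β - Lp / 2)) * tv := by
      nlinarith
    linarith [hhalf]
  have heq : (1 - ρ * (2 * β - 1 - Lp)) * tv
      = (1 - ρ * (β - Lp / 2)) * tv + ρ * (1 + Lp / 2 - β) * tv := by ring
  have hpos : 0 ≤ ρ * (1 + Lp / 2 - β) * tv :=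
    mul_nonneg (mul_nonneg hρ0.le (by linarith)) htv0
  rw [htvdef] at *
  linarith
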